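/- Let A⁽¹⁾, …, A⁽ᵍ⁾ be measurements on ℂ^d, where A⁽ⁱ⁾ has n i outcomes and all of its effects are nonzero. Suppose there exists a positive definite ρ ∈ Matrix (Fin d) (Fin d) ℂ with trace 1 such that 𝔥(F_ρ(A⁽¹⁾), …, F_ρ(A⁽ᵍ⁾)) > min d (∏ i, n i), where 𝔥 is the height of the family of d² × d² matrices F_ρ(A⁽ⁱ⁾). Then the measurements A⁽¹⁾, …, A⁽ᵍ⁾ are incompatible: there is no measurement C (with any finite number of outcomes) such that A⁽ⁱ⁾ ⪯ C for every i. -/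

import Mathlib

open Matrix
open scoped Kronecker ComplexOrder

noncomputable section

/-- A measurement (POVM): a finite family of positive semidefinite matrices summing to `1`. -/
def IsMeasurement {ι κ : Type*} [Fintype ι] [DecidableEq ι] [Fintype κ]
    (A : κ → Matrix ι ι ℂ) : Prop :=
  (∀ x, (A x).PosSemidef) ∧ ∑ x, A x = 1

/-- `A` is a post-processing of `B`: `A ⪯ B`. -/
def PostProc {ι : Type*} {n m : ℕ}
    (A : Fin n → Matrix ι ι ℂ) (B : Fin m → Matrix ι ι ℂ) : Prop :=
  ∃ μ : Fin n → Fin m → ℝ,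
    (∀ x y, 0 ≤ μ x y) ∧ (∀ y, ∑ x, μ x y = 1) ∧
    (∀ x, A x = ∑ y, (μ x y : ℂ) • B y)

/-- The outer product `|E⟩⟨F|` of the vectorizations of two matrices. -/
def outerProd {ι : Type*} (E F : Matrix ι ι ℂ) : Matrix (ι × ι) (ι × ι) ℂ :=
  Matrix.of fun p q => E p.1 p.2 * star (F q.1 q.2)

/-- The (un-normalized) Fisher information map of a measurement. -/
noncomputable def Fisher {ι κ : Type*} [Fintype ι] [Fintype κ]
    (A : κ → Matrix ι ι ℂ) : Matrix (ι × ι) (ι × ι) ℂ :=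
  ∑ x, (Matrix.trace (A x))⁻¹ • outerProd (A x) (A x)

/-- The generalized Fisher information map of a measurement, relative to a
positive definite state `ρ` (with positive semidefinite square root `ρ^{1/2}`). -/
noncomputable def FisherRho {ι κ : Type*} [Fintype ι] [DecidableEq ι] [Fintype κ]
    {ρ : Matrix ι ι ℂ} (hρ : ρ.PosDef) (A : κ → Matrix ι ι ℂ) :
    Matrix (ι × ι) (ι × ι) ℂ :=
  ∑ x, (Matrix.trace (ρ * A x))⁻¹ •
    outerProd ((hρ.posSemidef.1.eigenvectorUnitary.1 *
        diagonal ((↑) ∘ (√·) ∘ hρ.posSemidef.1.eigenvalues) *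
        (star hρ.posSemidef.1.eigenvectorUnitary : Matrix ι ι ℂ)) * A x)
      ((hρ.posSemidef.1.eigenvectorUnitary.1 *
        diagonal ((↑) ∘ (√·) ∘ hρ.posSemidef.1.eigenvalues) *
        (star hρ.posSemidef.1.eigenvectorUnitary : Matrix ι ι ℂ)) * A x)

/-- The height of a finite family of self-adjoint matrices: the infimum of the traces of
Hermitian matrices dominating every member in the Loewner order. -/
noncomputable def height {ι κ : Type*} [Fintype ι] [Fintype κ]
    (X : κ → Matrix ι ι ℂ) : ℝ :=
  sInf { t : ℝ | ∃ H : Matrix ι ι ℂ, H.IsHermitian ∧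
    (∀ i, (H - X i).PosSemidef) ∧ t = (Matrix.trace H).re }
namespace Matrix.PosSemidef

/-- square root of a PSD matrix via the spectral decomposition. -/
abbrev sqrt {n : Type*} [Fintype n] [DecidableEq n] {B : Matrix n n ℂ} (hB : B.PosSemidef) :
    Matrix n n ℂ :=
  hB.1.eigenvectorUnitary.1 * diagonal ((↑) ∘ (√·) ∘ hB.1.eigenvalues) *
    (star hB.1.eigenvectorUnitary : Matrix n n ℂ)

lemma posSemidef_sqrt {n : Type*} [Fintype n] [DecidableEq n] {B : Matrix n n ℂ}
    (hB : B.PosSemidef) : hB.sqrt.PosSemidef := by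
  have hD : (diagonal (((↑) ∘ (√·) ∘ hB.1.eigenvalues : n → ℂ))).PosSemidef :=
    PosSemidef.diagonal fun i => by
      simp only [Function.comp_apply, Pi.zero_apply]
      exact Complex.zero_le_real.mpr (Real.sqrt_nonneg _)
  have := hD.mul_mul_conjTranspose_same (hB.1.eigenvectorUnitary.1)
  simpa [sqrt, Matrix.star_eq_conjTranspose] using this

lemma sqrt_mul_self {n : Type*} [Fintype n] [DecidableEq n] {B : Matrix n n ℂ}
    (hB : B.PosSemidef) : hB.sqrt * hB.sqrt = B := by
  set U : Matrix n n ℂ := hB.1.eigenvectorUnitary.1 with hU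
  set D : Matrix n n ℂ := diagonal ((↑) ∘ (√·) ∘ hB.1.eigenvalues) with hD
  have hUU : (star hB.1.eigenvectorUnitary : Matrix n n ℂ) * U = 1 :=
    Unitary.coe_star_mul_self _
  have e : hB.sqrt * hB.sqrt
      = U * (D * ((star hB.1.eigenvectorUnitary : Matrix n n ℂ) * U) * D)
        * (star hB.1.eigenvectorUnitary : Matrix n n ℂ) := by
    simp only [sqrt, Matrix.mul_assoc]; rfl
  rw [e, hUU, Matrix.mul_one, hD, diagonal_mul_diagonal]
  conv_rhs => rw [hB.1.spectral_theorem, Unitary.conjStarAlgAut_apply]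
  congr 3
  funext i
  simp only [Function.comp_apply]
  rw [← Complex.ofReal_mul, Real.mul_self_sqrt (hB.eigenvalues_nonneg i)]
  rfl

end Matrix.PosSemidef

namespace Stmt17Helper
open Finset

variable {d : ℕ}

/-- trace of `Bᴴ * B` as a sum of `normSq`s. -/
lemma trace_cthm {P : Type*} [Fintype P] (B : Matrix P P ℂ) :
    Matrix.trace (Bᴴ * B) = ((∑ j, ∑ i, Complex.normSq (B i j) : ℝ) : ℂ) := by
  push_cast
  simp only [Matrix.trace, Matrix.diag_apply, Matrix.mul_apply, Matrix.conjTranspose_apply,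
    Complex.star_def, Complex.normSq_eq_conj_mul_self]

lemma eq_zero_of_sum_normSq {P : Type*} [Fintype P] (B : Matrix P P ℂ)
    (h : (∑ j, ∑ i, Complex.normSq (B i j) : ℝ) = 0) : B = 0 := by
  ext i j
  have h1 := (Finset.sum_eq_zero_iff_of_nonneg (fun j _ => Finset.sum_nonneg
    (fun i _ => Complex.normSq_nonneg _))).mp h j (mem_univ j)
  have h2 := (Finset.sum_eq_zero_iff_of_nonneg (fun i _ => Complex.normSq_nonneg _)).mp
    h1 i (mem_univ i)
  simpa using Complex.normSq_eq_zero.mp h2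

/-- key trace identity -/
lemma trace_rho_mul {ρ B : Matrix (Fin d) (Fin d) ℂ}
    (hρ : ρ.PosSemidef) (hB : B.PosSemidef) :
    Matrix.trace (ρ * B)
      = Matrix.trace ((hB.sqrt * hρ.sqrt)ᴴ * (hB.sqrt * hρ.sqrt)) := by
  rw [Matrix.conjTranspose_mul, hρ.posSemidef_sqrt.1, hB.posSemidef_sqrt.1]
  have : hρ.sqrt * hB.sqrt * (hB.sqrt * hρ.sqrt) = hρ.sqrt * B * hρ.sqrt := by
    conv_rhs => rw [← hB.sqrt_mul_self]
    noncomm_ring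
  rw [this, Matrix.trace_mul_cycle, hρ.sqrt_mul_self]

lemma trace_rho_psd {ρ B : Matrix (Fin d) (Fin d) ℂ}
    (hρ : ρ.PosSemidef) (hB : B.PosSemidef) :
    ∃ r : ℝ, 0 ≤ r ∧ Matrix.trace (ρ * B) = (r : ℂ) := by
  refine ⟨_, ?_, (trace_rho_mul hρ hB).trans (trace_cthm _)⟩
  exact Finset.sum_nonneg fun j _ => Finset.sum_nonneg fun i _ => Complex.normSq_nonneg _

lemma psd_zero_of_trace {ρ B : Matrix (Fin d) (Fin d) ℂ}
    (hρ : ρ.PosDef) (hB : B.PosSemidef)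
    (h : Matrix.trace (ρ * B) = 0) : B = 0 := by
  have h2 := (trace_rho_mul hρ.posSemidef hB).symm.trans h
  rw [trace_cthm] at h2
  have hM : hB.sqrt * hρ.posSemidef.sqrt = 0 :=
    eq_zero_of_sum_normSq _ (by exact_mod_cast h2)
  have hρu : IsUnit ρ.det := (Matrix.isUnit_iff_isUnit_det ρ).mp hρ.isUnit
  have hBρ : hB.sqrt * ρ = 0 := by
    have := congrArg (· * hρ.posSemidef.sqrt) hM
    simp only [Matrix.zero_mul] at this
    rwa [Matrix.mul_assoc, hρ.posSemidef.sqrt_mul_self] at this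
  have hs : hB.sqrt = 0 := by
    have h3 := congrArg (· * ρ⁻¹) hBρ
    simpa [Matrix.mul_assoc, Matrix.mul_nonsing_inv _ hρu] using h3
  rw [← hB.sqrt_mul_self, hs, Matrix.mul_zero]

lemma psd_real_smul {P : Type*} [Fintype P] {M : Matrix P P ℂ} (hM : M.PosSemidef) {c : ℝ}
    (hc : 0 ≤ c) : ((c : ℂ) • M).PosSemidef := by
  refine Matrix.posSemidef_iff_dotProduct_mulVec.mpr ⟨?_, ?_⟩
  · show ((c:ℂ) • M)ᴴ = _
    rw [Matrix.conjTranspose_smul, hM.1]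
    congr 1
    simp [Complex.star_def]
  · intro x
    rw [Matrix.smul_mulVec, dotProduct_smul, smul_eq_mul]
    exact mul_nonneg (by exact_mod_cast hc) (hM.dotProduct_mulVec_nonneg x)

lemma psd_sum {κ P : Type*} [Fintype P] (s : Finset κ) (f : κ → Matrix P P ℂ)
    (h : ∀ y ∈ s, (f y).PosSemidef) : (∑ y ∈ s, f y).PosSemidef :=
  Finset.sum_induction f _ (fun _ _ ha hb => ha.add hb) Matrix.PosSemidef.zero h


/-- Pairing of a vectorized matrix against a vector. -/
def Lv {d : ℕ} (E : Matrix (Fin d) (Fin d) ℂ) (w : Fin d × Fin d → ℂ) : ℂ :=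
  ∑ p : Fin d × Fin d, (starRingEnd ℂ) (E p.1 p.2) * w p

lemma sum_mulVec {κ P : Type*} [Fintype κ] [Fintype P]
    (s : Finset κ) (M : κ → Matrix P P ℂ) (w : P → ℂ) :
    (∑ x ∈ s, M x) *ᵥ w = ∑ x ∈ s, (M x *ᵥ w) := by
  funext p
  simp only [Matrix.mulVec, dotProduct, Finset.sum_apply, Matrix.sum_apply,
    Finset.sum_mul]
  rw [Finset.sum_comm]

lemma quad_outer (E : Matrix (Fin d) (Fin d) ℂ) (w : Fin d × Fin d → ℂ) :
    star w ⬝ᵥ (outerProd E E *ᵥ w) = (Complex.normSq (Lv E w) : ℂ) := by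
  have hmv : outerProd E E *ᵥ w = fun p => E p.1 p.2 * Lv E w := by
    funext p
    simp only [Matrix.mulVec, dotProduct, outerProd, Matrix.of_apply, Lv,
      Finset.mul_sum, Complex.star_def]
    exact Finset.sum_congr rfl fun q _ => by ring
  rw [hmv]
  have : star w ⬝ᵥ (fun p => E p.1 p.2 * Lv E w) = (starRingEnd ℂ) (Lv E w) * Lv E w := by
    simp only [dotProduct, Pi.star_apply, Complex.star_def, Lv, map_sum,
      _root_.map_mul, Complex.conj_conj, Finset.sum_mul]
    exact Finset.sum_congr rfl fun p _ => by ring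
  rw [this, ← Complex.normSq_eq_conj_mul_self]

lemma trace_outer (E : Matrix (Fin d) (Fin d) ℂ) :
    Matrix.trace (outerProd E E)
      = ((∑ p : Fin d × Fin d, Complex.normSq (E p.1 p.2) : ℝ) : ℂ) := by
  push_cast
  simp only [Matrix.trace, Matrix.diag_apply, outerProd, Matrix.of_apply, Complex.star_def,
    Complex.mul_conj]

lemma herm_outer (E : Matrix (Fin d) (Fin d) ℂ) : (outerProd E E).IsHermitian := by
  show _ᴴ = _
  ext p q
  simp only [Matrix.conjTranspose_apply, outerProd, Matrix.of_apply, Complex.star_def,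
    _root_.map_mul, Complex.conj_conj]
  ring

lemma star_dot_self {P : Type*} [Fintype P] (v : P → ℂ) :
    star v ⬝ᵥ v = ((∑ i, Complex.normSq (v i) : ℝ) : ℂ) := by
  push_cast
  simp only [dotProduct, Pi.star_apply, Complex.star_def,
    Complex.normSq_eq_conj_mul_self]

/-- A PSD matrix is dominated by its trace times the identity. -/
lemma psd_le_trace_smul_one {P : Type*} [Fintype P] [DecidableEq P]
    {B : Matrix P P ℂ} (hB : B.PosSemidef) :
    (Matrix.trace B • (1 : Matrix P P ℂ) - B).PosSemidef := by
  obtain ⟨C, rfl⟩ : ∃ C : Matrix P P ℂ, B = Cᴴ * C :=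
    ⟨hB.sqrt, by rw [hB.posSemidef_sqrt.1, hB.sqrt_mul_self]⟩
  rw [trace_cthm]
  set τ : ℝ := ∑ j, ∑ i, Complex.normSq (C i j) with hτ
  refine Matrix.posSemidef_iff_dotProduct_mulVec.mpr ⟨?_, ?_⟩
  · show _ᴴ = _
    rw [Matrix.conjTranspose_sub, Matrix.conjTranspose_smul, Matrix.conjTranspose_one,
      Matrix.conjTranspose_mul, Matrix.conjTranspose_conjTranspose]
    congr 1
    simp [Complex.star_def]
  · intro x
    rw [Matrix.sub_mulVec, dotProduct_sub, Matrix.smul_mulVec,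
      Matrix.one_mulVec, dotProduct_smul, ← Matrix.mulVec_mulVec,
      Matrix.dotProduct_mulVec, Matrix.vecMul_conjTranspose, star_star,
      star_dot_self, star_dot_self (C *ᵥ x), smul_eq_mul, ← Complex.ofReal_mul,
      ← Complex.ofReal_sub]
    rw [Complex.zero_le_real, sub_nonneg]
    -- real Cauchy–Schwarz
    calc ∑ i, Complex.normSq ((C *ᵥ x) i)
        ≤ ∑ i, ((∑ j, Complex.normSq (C i j)) * ∑ j, Complex.normSq (x j)) := by
          refine Finset.sum_le_sum fun i _ => ?_
          have h1 : ‖(C *ᵥ x) i‖ ≤ ∑ j, ‖C i j‖ * ‖x j‖ := by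
            refine (norm_sum_le _ _).trans_eq ?_
            exact Finset.sum_congr rfl fun j _ => norm_mul _ _
          have h2 : (∑ j, ‖C i j‖ * ‖x j‖) ^ 2
              ≤ (∑ j, ‖C i j‖ ^ 2) * ∑ j, ‖x j‖ ^ 2 :=
            Finset.sum_mul_sq_le_sq_mul_sq _ _ _
          have h3 : Complex.normSq ((C *ᵥ x) i) = ‖(C *ᵥ x) i‖ ^ 2 := by
            rw [← Complex.sq_norm]
          rw [h3]
          refine le_trans (pow_le_pow_left₀ (norm_nonneg _) h1 2) (h2.trans_eq ?_)
          congr 1 <;> exact Finset.sum_congr rfl fun j _ => by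
            rw [← Complex.sq_norm]
        _ = τ * ∑ j, Complex.normSq (x j) := by
          rw [← Finset.sum_mul, hτ, Finset.sum_comm]


lemma dot_sum {κ P : Type*} [Fintype P] (s : Finset κ) (v : P → ℂ) (w : κ → P → ℂ) :
    v ⬝ᵥ (∑ x ∈ s, w x) = ∑ x ∈ s, v ⬝ᵥ w x := by
  simp only [dotProduct, Finset.sum_apply, Finset.mul_sum]
  rw [Finset.sum_comm]

variable {ρ : Matrix (Fin d) (Fin d) ℂ}

lemma fisher_quad {κ : Type*} [Fintype κ] (hρ : ρ.PosDef)
    {B : κ → Matrix (Fin d) (Fin d) ℂ} (hB : ∀ y, (B y).PosSemidef)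
    (w : Fin d × Fin d → ℂ) :
    star w ⬝ᵥ (FisherRho hρ B *ᵥ w)
      = ((∑ y, ((Matrix.trace (ρ * B y)).re)⁻¹
          * Complex.normSq (Lv (hρ.posSemidef.sqrt * B y) w) : ℝ) : ℂ) := by
  unfold FisherRho
  rw [sum_mulVec, dot_sum, Complex.ofReal_sum]
  refine Finset.sum_congr rfl fun y _ => ?_
  rw [Matrix.smul_mulVec, dotProduct_smul, smul_eq_mul, quad_outer]
  obtain ⟨r, hr0, hr⟩ := trace_rho_psd hρ.posSemidef (hB y)
  rw [hr]
  push_cast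
  norm_num

lemma fisher_herm {κ : Type*} [Fintype κ] (hρ : ρ.PosDef)
    {B : κ → Matrix (Fin d) (Fin d) ℂ} (hB : ∀ y, (B y).PosSemidef) :
    (FisherRho hρ B).IsHermitian := by
  show _ᴴ = _
  unfold FisherRho
  rw [Matrix.conjTranspose_sum]
  refine Finset.sum_congr rfl fun y _ => ?_
  obtain ⟨r, hr0, hr⟩ := trace_rho_psd hρ.posSemidef (hB y)
  rw [hr, Matrix.conjTranspose_smul, herm_outer]
  congr 1
  simp [Complex.star_def]

lemma fisher_trace {κ : Type*} [Fintype κ] (hρ : ρ.PosDef)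
    {B : κ → Matrix (Fin d) (Fin d) ℂ} (hB : ∀ y, (B y).PosSemidef) :
    Matrix.trace (FisherRho hρ B)
      = ((∑ y, ((Matrix.trace (ρ * B y)).re)⁻¹
          * (∑ p : Fin d × Fin d, Complex.normSq ((hρ.posSemidef.sqrt * B y) p.1 p.2)) : ℝ) : ℂ) := by
  unfold FisherRho
  rw [Matrix.trace_sum, Complex.ofReal_sum]
  refine Finset.sum_congr rfl fun y _ => ?_
  rw [Matrix.trace_smul, trace_outer, smul_eq_mul]
  obtain ⟨r, hr0, hr⟩ := trace_rho_psd hρ.posSemidef (hB y)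
  rw [hr]
  push_cast
  norm_num


lemma trace_psd_real {B : Matrix (Fin d) (Fin d) ℂ} (hB : B.PosSemidef) :
    ∃ t : ℝ, 0 ≤ t ∧ Matrix.trace B = (t : ℂ) := by
  have hBe : B = hB.sqrtᴴ * hB.sqrt := by rw [hB.posSemidef_sqrt.1, hB.sqrt_mul_self]
  refine ⟨_, ?_, by rw [hBe, trace_cthm]⟩
  exact Finset.sum_nonneg fun j _ => Finset.sum_nonneg fun i _ => Complex.normSq_nonneg _

lemma N_eq (hρ : ρ.PosDef) {B : Matrix (Fin d) (Fin d) ℂ} (hB : B.PosSemidef) :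
    ((∑ p : Fin d × Fin d, Complex.normSq ((hρ.posSemidef.sqrt * B) p.1 p.2) : ℝ) : ℂ)
      = Matrix.trace (ρ * (B * B)) := by
  set S := hρ.posSemidef.sqrt with hS
  have h1 : Matrix.trace ((S * B)ᴴ * (S * B))
      = ((∑ j, ∑ i, Complex.normSq ((S * B) i j) : ℝ) : ℂ) := trace_cthm _
  have h2 : (S * B)ᴴ * (S * B) = B * ρ * B := by
    rw [Matrix.conjTranspose_mul, hρ.posSemidef.posSemidef_sqrt.1, hB.1]
    have : B * S * (S * B) = B * (S * S) * B := by noncomm_ring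
    rw [this, hρ.posSemidef.sqrt_mul_self]
  have h3 : Matrix.trace (B * ρ * B) = Matrix.trace (ρ * (B * B)) := by
    rw [Matrix.trace_mul_cycle, Matrix.trace_mul_comm]
  rw [← h3, ← h2, h1]
  congr 1
  rw [Fintype.sum_prod_type, Finset.sum_comm]

lemma diff_trace_nonneg (hρ : ρ.PosDef) {D : Matrix (Fin d) (Fin d) ℂ} (hD : D.PosSemidef) :
    0 ≤ (Matrix.trace (ρ * D)).re := by
  obtain ⟨r, hr0, hr⟩ := trace_rho_psd hρ.posSemidef hD
  rw [hr]; simpa using hr0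

/-- `B - B*B` is PSD when `B` is PSD with `1 - B` PSD. -/
lemma psd_sub_sq {B : Matrix (Fin d) (Fin d) ℂ} (hB : B.PosSemidef)
    (h1B : ((1 : Matrix (Fin d) (Fin d) ℂ) - B).PosSemidef) :
    (B - B * B).PosSemidef := by
  have base := h1B.conjTranspose_mul_mul_same hB.sqrt
  rw [hB.posSemidef_sqrt.1] at base
  have e : hB.sqrt * ((1 : Matrix (Fin d) (Fin d) ℂ) - hB.sqrt * hB.sqrt) * hB.sqrt
      = hB.sqrt * hB.sqrt - hB.sqrt * (hB.sqrt * hB.sqrt) * hB.sqrt := by noncomm_ring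
  have e2 : hB.sqrt * (hB.sqrt * hB.sqrt) * hB.sqrt
      = (hB.sqrt * hB.sqrt) * (hB.sqrt * hB.sqrt) := by noncomm_ring
  rw [e2] at e
  rw [hB.sqrt_mul_self] at e
  rwa [e] at base

/-- `(trace B) • B - B*B` is PSD when `B` is PSD. -/
lemma psd_trace_smul_sub_sq {B : Matrix (Fin d) (Fin d) ℂ} (hB : B.PosSemidef) :
    (Matrix.trace B • B - B * B).PosSemidef := by
  have base := (psd_le_trace_smul_one hB).conjTranspose_mul_mul_same hB.sqrt
  rw [hB.posSemidef_sqrt.1] at base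
  have e : hB.sqrt * (Matrix.trace B • (1 : Matrix (Fin d) (Fin d) ℂ) - hB.sqrt * hB.sqrt) * hB.sqrt
      = Matrix.trace B • (hB.sqrt * hB.sqrt)
        - (hB.sqrt * hB.sqrt) * (hB.sqrt * hB.sqrt) := by
    rw [Matrix.mul_sub, Matrix.sub_mul,
      mul_smul_comm (Matrix.trace B) hB.sqrt (1 : Matrix (Fin d) (Fin d) ℂ),
      smul_mul_assoc, Matrix.mul_one]
    rw [show hB.sqrt * (hB.sqrt * hB.sqrt) * hB.sqrt
        = (hB.sqrt * hB.sqrt) * (hB.sqrt * hB.sqrt) from by noncomm_ring]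
  rw [hB.sqrt_mul_self] at e
  rwa [e] at base

/-- summand bound by 1. -/
lemma summand_le_one (hρ : ρ.PosDef) {B : Matrix (Fin d) (Fin d) ℂ} (hB : B.PosSemidef)
    (h1B : ((1 : Matrix (Fin d) (Fin d) ℂ) - B).PosSemidef) :
    ((Matrix.trace (ρ * B)).re)⁻¹
      * (∑ p : Fin d × Fin d, Complex.normSq ((hρ.posSemidef.sqrt * B) p.1 p.2)) ≤ 1 := by
  obtain ⟨r, hr0, hr⟩ := trace_rho_psd hρ.posSemidef hB
  set N : ℝ := ∑ p : Fin d × Fin d, Complex.normSq ((hρ.posSemidef.sqrt * B) p.1 p.2) with hN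
  have hQ : (Matrix.trace (ρ * B)).re = r := by rw [hr]; simp
  rcases eq_or_lt_of_le hr0 with h0 | hpos
  · have hB0 : B = 0 := psd_zero_of_trace hρ hB (by rw [hr, ← h0]; simp)
    have : N = 0 := by
      rw [hN]
      refine Finset.sum_eq_zero fun p _ => ?_
      rw [hB0]; simp
    rw [this, hQ]; simp
  · have hNQ : N ≤ r := by
      have hdiff : 0 ≤ (Matrix.trace (ρ * (B - B * B))).re :=
        diff_trace_nonneg hρ (psd_sub_sq hB h1B)
      have : Matrix.trace (ρ * (B - B * B)) = ((r - N : ℝ) : ℂ) := by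
        rw [Matrix.mul_sub, Matrix.trace_sub, hr, ← N_eq hρ hB, ← hN]
        push_cast; ring
      rw [this] at hdiff
      simpa using sub_nonneg.mp (by simpa using hdiff)
    rw [hQ]
    calc r⁻¹ * N ≤ r⁻¹ * r := by
          exact mul_le_mul_of_nonneg_left hNQ (inv_nonneg.mpr hr0)
      _ = 1 := inv_mul_cancel₀ hpos.ne'


/-- summand bound by the trace of the effect. -/
lemma summand_le_trace (hρ : ρ.PosDef) {B : Matrix (Fin d) (Fin d) ℂ} (hB : B.PosSemidef) :
    ((Matrix.trace (ρ * B)).re)⁻¹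
      * (∑ p : Fin d × Fin d, Complex.normSq ((hρ.posSemidef.sqrt * B) p.1 p.2))
      ≤ (Matrix.trace B).re := by
  obtain ⟨r, hr0, hr⟩ := trace_rho_psd hρ.posSemidef hB
  obtain ⟨t, ht0, ht⟩ := trace_psd_real hB
  set N : ℝ := ∑ p : Fin d × Fin d, Complex.normSq ((hρ.posSemidef.sqrt * B) p.1 p.2) with hN
  have hQ : (Matrix.trace (ρ * B)).re = r := by rw [hr]; simp
  have hT : (Matrix.trace B).re = t := by rw [ht]; simp
  rcases eq_or_lt_of_le hr0 with h0 | hpos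
  · have hB0 : B = 0 := psd_zero_of_trace hρ hB (by rw [hr, ← h0]; simp)
    have hN0 : N = 0 := by
      rw [hN]
      refine Finset.sum_eq_zero fun p _ => ?_
      rw [hB0]; simp
    rw [hN0, hQ, hT]
    simpa using ht0
  · have hkey : N ≤ t * r := by
      have hdiff : 0 ≤ (Matrix.trace (ρ * (Matrix.trace B • B - B * B))).re :=
        diff_trace_nonneg hρ (psd_trace_smul_sub_sq hB)
      have hexp : Matrix.trace (ρ * (Matrix.trace B • B - B * B)) = ((t * r - N : ℝ) : ℂ) := by
        rw [Matrix.mul_sub, Matrix.trace_sub, mul_smul_comm, Matrix.trace_smul, ht, hr,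
          ← N_eq hρ hB, ← hN, smul_eq_mul]
        push_cast
        ring
      rw [hexp] at hdiff
      simpa using sub_nonneg.mp (by simpa using hdiff)
    rw [hQ, hT]
    calc r⁻¹ * N ≤ r⁻¹ * (t * r) := mul_le_mul_of_nonneg_left hkey (inv_nonneg.mpr hr0)
      _ = t := by field_simp


lemma trace_re_cast (hρ : ρ.PosSemidef) {B : Matrix (Fin d) (Fin d) ℂ} (hB : B.PosSemidef) :
    Matrix.trace (ρ * B) = (((Matrix.trace (ρ * B)).re : ℝ) : ℂ) := by
  obtain ⟨r, _, hr⟩ := trace_rho_psd hρ hB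
  rw [hr]; simp

lemma Lv_zero (w : Fin d × Fin d → ℂ) : Lv (0 : Matrix (Fin d) (Fin d) ℂ) w = 0 := by
  unfold Lv; simp

lemma Lv_sum_smul {κ : Type*} [Fintype κ] (c : κ → ℝ) (M : κ → Matrix (Fin d) (Fin d) ℂ)
    (w : Fin d × Fin d → ℂ) :
    Lv (∑ y, (c y : ℂ) • M y) w = ∑ y, (c y : ℂ) * Lv (M y) w := by
  unfold Lv
  simp only [Matrix.sum_apply, Matrix.smul_apply, smul_eq_mul, map_sum, _root_.map_mul,
    Complex.conj_ofReal, Finset.sum_mul, Finset.mul_sum]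
  rw [Finset.sum_comm]
  exact Finset.sum_congr rfl fun y _ => Finset.sum_congr rfl fun p _ => by ring

lemma fisher_mono {n : ℕ} {κ : Type*} [Fintype κ] (hρ : ρ.PosDef)
    {A : Fin n → Matrix (Fin d) (Fin d) ℂ} {B : κ → Matrix (Fin d) (Fin d) ℂ}
    (hA : ∀ x, (A x).PosSemidef) (hA0 : ∀ x, A x ≠ 0) (hB : ∀ y, (B y).PosSemidef)
    (μ : Fin n → κ → ℝ) (hμ0 : ∀ x y, 0 ≤ μ x y) (hμ1 : ∀ y, ∑ x, μ x y = 1)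
    (hAB : ∀ x, A x = ∑ y, (μ x y : ℂ) • B y) :
    (FisherRho hρ B - FisherRho hρ A).PosSemidef := by
  set S := hρ.posSemidef.sqrt with hS
  set Q : κ → ℝ := fun y => (Matrix.trace (ρ * B y)).re with hQdef
  set P : Fin n → ℝ := fun x => (Matrix.trace (ρ * A x)).re with hPdef
  have hQ0 : ∀ y, 0 ≤ Q y := fun y => diff_trace_nonneg hρ (hB y)
  have hQc : ∀ y, Matrix.trace (ρ * B y) = ((Q y : ℝ) : ℂ) := fun y =>
    trace_re_cast hρ.posSemidef (hB y)
  have hQzero : ∀ y, Q y = 0 → B y = 0 := fun y h =>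
    psd_zero_of_trace hρ (hB y) (by rw [hQc y, h]; simp)
  have hPQ : ∀ x, Matrix.trace (ρ * A x) = ((∑ y, μ x y * Q y : ℝ) : ℂ) := by
    intro x
    rw [hAB x, Finset.mul_sum, Matrix.trace_sum, Complex.ofReal_sum]
    refine Finset.sum_congr rfl fun y _ => ?_
    rw [mul_smul_comm, Matrix.trace_smul, smul_eq_mul, hQc y]
    push_cast; ring
  have hPval : ∀ x, P x = ∑ y, μ x y * Q y := fun x => by
    rw [hPdef]; simp only; rw [hPQ x]; simp
  have hP0 : ∀ x, 0 < P x := by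
    intro x
    rcases eq_or_lt_of_le (diff_trace_nonneg hρ (hA x) : 0 ≤ P x) with h0 | h
    · exfalso
      apply hA0 x
      apply psd_zero_of_trace hρ (hA x)
      rw [hPQ x]
      norm_cast
      rw [← hPval x]
      exact h0.symm
    · exact h
  refine Matrix.posSemidef_iff_dotProduct_mulVec.mpr
    ⟨(fisher_herm hρ hB).sub (fisher_herm hρ hA), fun w => ?_⟩
  rw [Matrix.sub_mulVec, dotProduct_sub, fisher_quad hρ hB w, fisher_quad hρ hA w,
    ← Complex.ofReal_sub]
  rw [Complex.zero_le_real, sub_nonneg]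
  set γ : κ → ℂ := fun y => Lv (S * B y) w with hγdef
  have hγ0 : ∀ y, Q y = 0 → γ y = 0 := by
    intro y h
    rw [hγdef]; simp only
    rw [hQzero y h, Matrix.mul_zero, Lv_zero]
  have key : ∀ x, (P x)⁻¹ * Complex.normSq (Lv (S * A x) w)
      ≤ ∑ y, μ x y * (Complex.normSq (γ y) / Q y) := by
    intro x
    have hαx : Lv (S * A x) w = ∑ y, (μ x y : ℂ) * γ y := by
      rw [show S * A x = ∑ y, (μ x y : ℂ) • (S * B y) from by
        rw [hAB x, Finset.mul_sum]
        exact Finset.sum_congr rfl fun y _ => (mul_smul_comm _ _ _), Lv_sum_smul]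
    have h1 : ‖Lv (S * A x) w‖ ≤ ∑ y, μ x y * ‖γ y‖ := by
      rw [hαx]
      refine (norm_sum_le _ _).trans_eq (Finset.sum_congr rfl fun y _ => ?_)
      rw [norm_mul, Complex.norm_real, Real.norm_eq_abs, abs_of_nonneg (hμ0 x y)]
    have h2 : (∑ y, μ x y * ‖γ y‖) ^ 2
        ≤ (∑ y, μ x y * Q y) * ∑ y, μ x y * (Complex.normSq (γ y) / Q y) := by
      refine Finset.sum_sq_le_sum_mul_sum_of_sq_eq_mul Finset.univ
        (fun y _ => mul_nonneg (hμ0 x y) (hQ0 y))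
        (fun y _ => mul_nonneg (hμ0 x y) (div_nonneg (Complex.normSq_nonneg _) (hQ0 y)))
        (fun y _ => ?_)
      rcases eq_or_lt_of_le (hQ0 y) with h0 | hq
      · rw [hγ0 y h0.symm]
        simp [← h0]
      · field_simp
        rw [Complex.sq_norm]
    have h3 : Complex.normSq (Lv (S * A x) w) ≤ (∑ y, μ x y * ‖γ y‖) ^ 2 := by
      have : Complex.normSq (Lv (S * A x) w) = ‖Lv (S * A x) w‖ ^ 2 := by
        rw [← Complex.sq_norm]
      rw [this]
      exact pow_le_pow_left₀ (norm_nonneg _) h1 2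
    calc (P x)⁻¹ * Complex.normSq (Lv (S * A x) w)
        ≤ (P x)⁻¹ * ((∑ y, μ x y * Q y) * ∑ y, μ x y * (Complex.normSq (γ y) / Q y)) :=
          mul_le_mul_of_nonneg_left (h3.trans h2) (inv_nonneg.mpr (hP0 x).le)
      _ = ∑ y, μ x y * (Complex.normSq (γ y) / Q y) := by
          rw [← hPval x, ← mul_assoc, inv_mul_cancel₀ (hP0 x).ne', one_mul]
  calc ∑ x, (P x)⁻¹ * Complex.normSq (Lv (S * A x) w)
      ≤ ∑ x, ∑ y, μ x y * (Complex.normSq (γ y) / Q y) :=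
        Finset.sum_le_sum fun x _ => key x
    _ = ∑ y, (Q y)⁻¹ * Complex.normSq (γ y) := by
        rw [Finset.sum_comm]
        refine Finset.sum_congr rfl fun y _ => ?_
        rw [← Finset.sum_mul, hμ1 y, one_mul, div_eq_inv_mul]


lemma fisher_trace_le {κ : Type*} [Fintype κ] [DecidableEq κ] (hρ : ρ.PosDef)
    {B : κ → Matrix (Fin d) (Fin d) ℂ} (hBpsd : ∀ y, (B y).PosSemidef)
    (hBsum : ∑ y, B y = 1) :
    (Matrix.trace (FisherRho hρ B)).re ≤ (d : ℝ)
      ∧ (Matrix.trace (FisherRho hρ B)).re ≤ (Fintype.card κ : ℝ) := by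
  have hone : ∀ y, ((1 : Matrix (Fin d) (Fin d) ℂ) - B y).PosSemidef := by
    intro y
    have he : (1 : Matrix (Fin d) (Fin d) ℂ) - B y = ∑ z ∈ Finset.univ.erase y, B z := by
      rw [← hBsum, ← Finset.add_sum_erase _ B (Finset.mem_univ y)]
      rw [add_sub_cancel_left]
    rw [he]
    exact psd_sum _ _ fun z _ => hBpsd z
  rw [fisher_trace hρ hBpsd, Complex.ofReal_re]
  constructor
  · calc ∑ y, ((Matrix.trace (ρ * B y)).re)⁻¹
          * (∑ p : Fin d × Fin d, Complex.normSq ((hρ.posSemidef.sqrt * B y) p.1 p.2))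
        ≤ ∑ y, (Matrix.trace (B y)).re :=
          Finset.sum_le_sum fun y _ => summand_le_trace hρ (hBpsd y)
      _ = (Matrix.trace (∑ y, B y)).re := by
          rw [Matrix.trace_sum, Complex.re_sum]
      _ = (d : ℝ) := by rw [hBsum, Matrix.trace_one]; simp
  · calc ∑ y, ((Matrix.trace (ρ * B y)).re)⁻¹
          * (∑ p : Fin d × Fin d, Complex.normSq ((hρ.posSemidef.sqrt * B y) p.1 p.2))
        ≤ ∑ _y : κ, (1 : ℝ) :=
          Finset.sum_le_sum fun y _ => summand_le_one hρ (hBpsd y) (hone y)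
      _ = (Fintype.card κ : ℝ) := by simp


lemma pi_sum_prod {ι : Type*} [Fintype ι] [DecidableEq ι] {β : ι → Type*}
    [∀ j, Fintype (β j)] (h : ∀ j, β j → ℝ) :
    ∑ f : (∀ j, β j), ∏ j, h j (f j) = ∏ j, ∑ t, h j t := by
  rw [Finset.prod_univ_sum, Fintype.piFinset_univ]

lemma pi_marginal {ι : Type*} [Fintype ι] [DecidableEq ι] {β : ι → Type*}
    [∀ j, Fintype (β j)] [∀ j, DecidableEq (β j)]
    (h : ∀ j, β j → ℝ) (i : ι) (x : β i) (hsum : ∀ j, ∑ t, h j t = 1) :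
    ∑ f : (∀ j, β j), (if f i = x then (1:ℝ) else 0) * ∏ j, h j (f j) = h i x := by
  classical
  set e := Equiv.piSplitAt i β with he
  rw [← Equiv.sum_comp e.symm (fun f => (if f i = x then (1:ℝ) else 0) * ∏ j, h j (f j)),
    Fintype.sum_prod_type]
  have happi : ∀ (t : β i) (r : ∀ j : {j // j ≠ i}, β j.1), (e.symm (t, r)) i = t := by
    intro t r
    simp [he]
  have happ : ∀ (t : β i) (r : ∀ j : {j // j ≠ i}, β j.1) (j : {j // j ≠ i}),
      (e.symm (t, r)) j.1 = r j := by
    intro t r j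
    simp [he, j.2]
  have key : ∀ (t : β i) (r : ∀ j : {j // j ≠ i}, β j.1),
      (if (e.symm (t, r)) i = x then (1:ℝ) else 0) * ∏ j, h j ((e.symm (t, r)) j)
        = ((if t = x then (1:ℝ) else 0) * h i t) * ∏ j : {j // j ≠ i}, h j.1 (r j) := by
    intro t r
    rw [happi, ← Finset.mul_prod_erase Finset.univ _ (Finset.mem_univ i), happi]
    rw [Finset.prod_subtype (p := fun j => j ≠ i) (Finset.univ.erase i)
      (fun j => by simp [Finset.mem_erase]) (fun j => h j ((e.symm (t, r)) j))]
    rw [Finset.prod_congr rfl fun j _ => by rw [happ t r j]]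
    ring
  calc ∑ t, ∑ r, (if (e.symm (t, r)) i = x then (1:ℝ) else 0) * ∏ j, h j ((e.symm (t, r)) j)
      = ∑ t, ∑ r : (∀ j : {j // j ≠ i}, β j.1),
          ((if t = x then (1:ℝ) else 0) * h i t) * ∏ j : {j // j ≠ i}, h j.1 (r j) :=
        Finset.sum_congr rfl fun t _ => Finset.sum_congr rfl fun r _ => key t r
    _ = (∑ t, (if t = x then (1:ℝ) else 0) * h i t)
          * ∑ r : (∀ j : {j // j ≠ i}, β j.1), ∏ j : {j // j ≠ i}, h j.1 (r j) := by
        rw [Finset.sum_mul_sum]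
    _ = h i x := by
        rw [pi_sum_prod (fun j : {j // j ≠ i} => h j.1)]
        rw [Finset.prod_congr rfl fun (j : {j // j ≠ i}) _ => hsum j.1, Finset.prod_const_one,
          mul_one]
        rw [Finset.sum_congr rfl fun t _ => by rw [ite_mul, one_mul, zero_mul]]
        rw [Finset.sum_ite_eq' Finset.univ x (h i)]
        simp

end Stmt17Helper

open Stmt17Helper

/-- The improved Fisher information incompatibility criterion. -/
theorem stmt17 {d g : ℕ} (n : Fin g → ℕ)
    (A : (i : Fin g) → Fin (n i) → Matrix (Fin d) (Fin d) ℂ)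
    (hA : ∀ i, IsMeasurement (A i)) (hA0 : ∀ i x, A i x ≠ 0)
    (h : ∃ (ρ : Matrix (Fin d) (Fin d) ℂ) (hρ : ρ.PosDef), Matrix.trace ρ = 1 ∧
      ((min d (∏ i, n i) : ℕ) : ℝ) < height (fun i => FisherRho hρ (A i))) :
    ¬ ∃ (m : ℕ) (C : Fin m → Matrix (Fin d) (Fin d) ℂ),
      IsMeasurement C ∧ ∀ i, PostProc (A i) C := by
  rintro ⟨m, C, ⟨hCpsd, hCsum⟩, hPP⟩
  obtain ⟨ρ, hρ, _htr1, hgt⟩ := h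
  classical
  choose μ hμ0 hμ1 hAμ using hPP
  -- the joint measurement over the product outcome set
  set G : (∀ j, Fin (n j)) → Matrix (Fin d) (Fin d) ℂ :=
    fun f => ∑ y, ((∏ j, μ j (f j) y : ℝ) : ℂ) • C y with hGdef
  have hGpsd : ∀ f, (G f).PosSemidef := fun f =>
    psd_sum _ _ fun y _ => psd_real_smul (hCpsd y)
      (Finset.prod_nonneg fun j _ => hμ0 j (f j) y)
  have hGsum : ∑ f, G f = 1 := by
    rw [hGdef, Finset.sum_comm]
    have step : ∀ y, ∑ f : (∀ j, Fin (n j)), ((∏ j, μ j (f j) y : ℝ) : ℂ) • C y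
        = ((∑ f : (∀ j, Fin (n j)), ∏ j, μ j (f j) y : ℝ) : ℂ) • C y := by
      intro y
      rw [Complex.ofReal_sum, Finset.sum_smul]
    rw [Finset.sum_congr rfl fun y _ => step y]
    have one : ∀ y : Fin m, (∑ f : (∀ j, Fin (n j)), ∏ j, μ j (f j) y : ℝ) = 1 := by
      intro y
      rw [pi_sum_prod (fun j t => μ j t y)]
      rw [Finset.prod_congr rfl fun j _ => hμ1 j y, Finset.prod_const_one]
    rw [Finset.sum_congr rfl fun y _ => by rw [one y, Complex.ofReal_one, one_smul]]
    exact hCsum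
  -- marginal post-processings
  set ν : (i : Fin g) → Fin (n i) → (∀ j, Fin (n j)) → ℝ :=
    fun i x f => if f i = x then (1:ℝ) else 0 with hνdef
  have hν0 : ∀ i x f, 0 ≤ ν i x f := by
    intro i x f
    rw [hνdef]
    dsimp only
    split <;> norm_num
  have hν1 : ∀ i f, ∑ x, ν i x f = 1 := by
    intro i f
    rw [hνdef]
    dsimp only
    rw [Finset.sum_ite_eq Finset.univ (f i) (fun _ => (1:ℝ))]
    simp
  have hAν : ∀ i x, A i x = ∑ f, (ν i x f : ℂ) • G f := by
    intro i x
    have expand : ∀ f : (∀ j, Fin (n j)), (ν i x f : ℂ) • G f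
        = ∑ y, ((ν i x f * ∏ j, μ j (f j) y : ℝ) : ℂ) • C y := by
      intro f
      rw [hGdef]
      dsimp only
      rw [Finset.smul_sum]
      exact Finset.sum_congr rfl fun y _ => by
        rw [smul_smul, ← Complex.ofReal_mul]
    rw [Finset.sum_congr rfl fun f _ => expand f, Finset.sum_comm]
    have step : ∀ y, ∑ f : (∀ j, Fin (n j)), ((ν i x f * ∏ j, μ j (f j) y : ℝ) : ℂ) • C y
        = ((μ i x y : ℝ) : ℂ) • C y := by
      intro y
      rw [show ∑ f : (∀ j, Fin (n j)), ((ν i x f * ∏ j, μ j (f j) y : ℝ) : ℂ) • C y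
          = ((∑ f : (∀ j, Fin (n j)), ν i x f * ∏ j, μ j (f j) y : ℝ) : ℂ) • C y from by
        rw [Complex.ofReal_sum, Finset.sum_smul]]
      congr 2
      exact pi_marginal (fun j t => μ j t y) i x (fun j => hμ1 j y)
    rw [Finset.sum_congr rfl fun y _ => step y]
    exact (hAμ i x).symm ▸ rfl
  -- the dominating Hermitian matrix
  set S : Set ℝ := { t : ℝ | ∃ H : Matrix ((Fin d) × (Fin d)) ((Fin d) × (Fin d)) ℂ,
    H.IsHermitian ∧ (∀ i, (H - FisherRho hρ (A i)).PosSemidef)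
      ∧ t = (Matrix.trace H).re } with hSdef
  have hmem : (Matrix.trace (FisherRho hρ G)).re ∈ S := by
    refine ⟨FisherRho hρ G, fisher_herm hρ hGpsd, fun i => ?_, rfl⟩
    exact fisher_mono hρ (fun x => (hA i).1 x) (hA0 i) hGpsd (ν i) (hν0 i)
      (hν1 i) (fun x => hAν i x)
  have hheight : height (fun i => FisherRho hρ (A i)) = sInf S := rfl
  have hbound : (Matrix.trace (FisherRho hρ G)).re ≤ ((min d (∏ i, n i) : ℕ) : ℝ) := by
    obtain ⟨h1, h2⟩ := fisher_trace_le hρ hGpsd hGsum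
    rw [Nat.cast_min]
    refine le_min h1 (h2.trans_eq ?_)
    rw [Fintype.card_pi]
    push_cast
    exact Finset.prod_congr rfl fun j _ => by rw [Fintype.card_fin]
  by_cases hbdd : BddBelow S
  · have hle : height (fun i => FisherRho hρ (A i)) ≤ (Matrix.trace (FisherRho hρ G)).re := by
      rw [hheight]
      exact csInf_le hbdd hmem
    linarith
  · rw [hheight, Real.sInf_of_not_bddBelow hbdd] at hgt
    exact absurd hgt (not_lt.mpr (Nat.cast_nonneg _))
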